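/- Assume (r1,r2,r3,r4,i,j,N) is admissible and r1 + r3 = r2 + r4. Then the shifted tuple (r1, r2+N−2, r3, r4+N−2, i+N−2, j+N−2, 2) is admissible, and F_1^N(r1, r2, i; r3, r4, j) = (−1)^N · [N−1]! · [N−2]! · Θ_1(N) · F_1^2(r1, r2+N−2, i+N−2; r3, r4+N−2, j+N−2), where Θ_1(N) = ∏_{m=1}^{N−2} ( [(i−r1+r2)/2 + m] · [(j+r2−r3)/2 + m] · [(j−r1+r4)/2 + m] · [(i−r3+r4)/2 + m] )^{−1/2}. (For N = 2 the empty product is 1 and the identity is trivial.) This expresses any type I multiplicity-free U_q(sl_N) 6-j symbol through a U_q(sl_2) 6-j symbol. -/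

import Mathlib

open Finset

/-- The quantum integer `[n] = (tⁿ − t⁻ⁿ)/(t − t⁻¹)`. -/
noncomputable def qint (t : ℝ) (n : ℤ) : ℝ := (t ^ n - t ^ (-n)) / (t - t⁻¹)

/-- The quantum factorial `[n]! = [1][2]⋯[n]`, with `[0]! = 1`
(and value `1` for negative arguments, which never occur below). -/
noncomputable def qfact (t : ℝ) (n : ℤ) : ℝ :=
  ∏ k ∈ Finset.range n.toNat, qint t ((k : ℤ) + 1)

/-- The q-Pochhammer symbol `(x; q)_n = ∏_{s=0}^{n−1} (1 − x qˢ)`. -/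
noncomputable def qpoch (x q : ℝ) (n : ℕ) : ℝ :=
  ∏ s ∈ Finset.range n, (1 - x * q ^ s)

/-- Admissibility of the tuple `(r₁,r₂,r₃,r₄,i,j,N)`. -/
def Admissible (r₁ r₂ r₃ r₄ i j N : ℤ) : Prop :=
  0 ≤ r₁ ∧ 0 ≤ r₂ ∧ 0 ≤ r₃ ∧ 0 ≤ r₄ ∧ 0 ≤ i ∧ 0 ≤ j ∧ 2 ≤ N ∧
  2 ∣ (r₁ + r₂ + i) ∧ 2 ∣ (r₃ + r₄ + i) ∧ 2 ∣ (r₁ + r₄ + j) ∧ 2 ∣ (r₂ + r₃ + j) ∧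
  max |r₁ - r₂| |r₃ - r₄| ≤ i ∧ i ≤ min (r₁ + r₂) (r₃ + r₄) ∧
  max |r₂ - r₃| |r₁ - r₄| ≤ j ∧ j ≤ min (r₂ + r₃) (r₁ + r₄)

/-- `ρ = (r₁+r₂+r₃+r₄)/2`. -/
def rho (r₁ r₂ r₃ r₄ : ℤ) : ℤ := (r₁ + r₂ + r₃ + r₄) / 2

/-- `m_max = (1/2)·min(r₁+r₂−i, r₃+r₄−i, r₁+r₄−j, r₂+r₃−j)`. -/
def mMax (r₁ r₂ r₃ r₄ i j : ℤ) : ℤ :=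
  (min (min (r₁ + r₂ - i) (r₃ + r₄ - i)) (min (r₁ + r₄ - j) (r₂ + r₃ - j))) / 2

/-- `m_min = (1/2)·max(0, r₁+r₃−i−j, r₂+r₄−i−j)`. -/
def mMin (r₁ r₂ r₃ r₄ i j : ℤ) : ℤ :=
  (max 0 (max (r₁ + r₃ - i - j) (r₂ + r₄ - i - j))) / 2

/-- `θ_N(a,b,c)`. -/
noncomputable def theta (t : ℝ) (N a b c : ℤ) : ℝ :=
  Real.sqrt (qfact t ((a + b - c) / 2) * qfact t ((a - b + c) / 2) *
    qfact t ((-a + b + c) / 2) / qfact t ((a + b + c) / 2 + N - 1))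

/-- `K′ = θ_N(r₁,r₂,i)·θ_N(r₃,r₄,i)·θ_N(r₁,r₄,j)·θ_N(r₂,r₃,j)·[N−1]!·[N−2]!`. -/
noncomputable def Kprime (t : ℝ) (N r₁ r₂ r₃ r₄ i j : ℤ) : ℝ :=
  theta t N r₁ r₂ i * theta t N r₃ r₄ i * theta t N r₁ r₄ j * theta t N r₂ r₃ j *
    qfact t (N - 1) * qfact t (N - 2)

/-- The multiplicity-free 6-j expression `F_T^N(r₁,r₂,i; r₃,r₄,j)` of type `T ∈ {1,2}`. -/
noncomputable def F (t : ℝ) (T : ℕ) (N r₁ r₂ i r₃ r₄ j : ℤ) : ℝ :=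
  Kprime t N r₁ r₂ r₃ r₄ i j *
    ∑ m ∈ Finset.Icc (mMin r₁ r₂ r₃ r₄ i j) (mMax r₁ r₂ r₃ r₄ i j),
      (-1 : ℝ) ^ (rho r₁ r₂ r₃ r₄ - m) * qfact t (rho r₁ r₂ r₃ r₄ + N - 1 - m) /
        (qfact t m * qfact t ((r₃ + r₄ - i) / 2 - m) * qfact t ((r₂ + r₃ - j) / 2 - m) *
          qfact t ((r₁ + r₄ - j) / 2 - m) * qfact t ((i + j - r₂ - r₄) / 2 + m) *
          qfact t ((r₁ + r₂ - i) / 2 + (N - 2) * (if T = 2 then 1 else 0) - m) *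
          qfact t ((i + j - r₁ - r₃) / 2 + (N - 2) * (if T = 1 then 1 else 0) + m))

/-- The prefactor `K_T` (for the case `m_min = 0`). -/
noncomputable def Kfac (t : ℝ) (T : ℕ) (N r₁ r₂ i r₃ r₄ j : ℤ) : ℝ :=
  Kprime t N r₁ r₂ r₃ r₄ i j * qfact t (rho r₁ r₂ r₃ r₄ + N - 1) /
    (qfact t ((r₃ + r₄ - i) / 2) *
      qfact t ((r₁ + r₂ - i) / 2 + (N - 2) * (if T = 2 then 1 else 0)) *
      qfact t ((r₂ + r₃ - j) / 2) * qfact t ((r₁ + r₄ - j) / 2) *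
      qfact t ((i + j - r₂ - r₄) / 2) *
      qfact t ((i + j - r₁ - r₃) / 2 + (N - 2) * (if T = 1 then 1 else 0)))


lemma qint_pos {t : ℝ} (ht : 0 < t) (ht1 : t ≠ 1) {n : ℤ} (hn : 1 ≤ n) : 0 < qint t n := by
  unfold qint
  rcases lt_or_gt_of_ne ht1 with h | h
  · apply div_pos_of_neg_of_neg
    · have := zpow_lt_zpow_right_of_lt_one₀ ht h (show -n < n by omega)
      linarith
    · have : 1 < t⁻¹ := (one_lt_inv₀ ht).2 h
      linarith
  · apply div_pos
    · have := zpow_lt_zpow_right₀ h (show -n < n by omega)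
      linarith
    · have : t⁻¹ < 1 := (inv_lt_one₀ ht).2 h
      linarith

lemma qfact_pos {t : ℝ} (ht : 0 < t) (ht1 : t ≠ 1) (n : ℤ) : 0 < qfact t n := by
  unfold qfact
  exact Finset.prod_pos fun k _ => qint_pos ht ht1 (by omega)

lemma qint_one {t : ℝ} (ht : 0 < t) (ht1 : t ≠ 1) : qint t 1 = 1 := by
  unfold qint
  rw [zpow_one, zpow_neg_one]
  apply div_self
  apply sub_ne_zero.mpr
  intro h
  have h3 : t * t = 1 := by
    nth_rewrite 2 [h]
    exact mul_inv_cancel₀ (ne_of_gt ht)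
  rcases mul_self_eq_one_iff.mp h3 with h4 | h4
  · exact ht1 h4
  · linarith

lemma qfact_zero (t : ℝ) : qfact t 0 = 1 := by
  unfold qfact
  simp

lemma qfact_one {t : ℝ} (ht : 0 < t) (ht1 : t ≠ 1) : qfact t 1 = 1 := by
  unfold qfact
  rw [show (1:ℤ).toNat = 1 from rfl, Finset.prod_range_one,
    show ((0:ℕ):ℤ) + 1 = 1 by norm_num, qint_one ht ht1]

lemma qfact_succ (t : ℝ) {a : ℤ} (ha : 0 ≤ a) : qfact t (a + 1) = qfact t a * qint t (a + 1) := by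
  unfold qfact
  rw [show (a+1).toNat = a.toNat + 1 by omega, Finset.prod_range_succ,
    show ((a.toNat : ℤ)) + 1 = a + 1 by omega]

lemma qfact_add (t : ℝ) {x : ℤ} (hx : 0 ≤ x) (K : ℕ) :
    qfact t (x + (K:ℤ)) = qfact t x * ∏ m ∈ Finset.Icc (1:ℤ) (K:ℤ), qint t (x + m) := by
  induction K with
  | zero => simp
  | succ k ih =>
    have hic : Finset.Icc (1:ℤ) ((k:ℤ)+1) = insert ((k:ℤ)+1) (Finset.Icc (1:ℤ) (k:ℤ)) := by
      ext y
      simp only [Finset.mem_Icc, Finset.mem_insert]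
      omega
    rw [show ((k+1:ℕ):ℤ) = (k:ℤ)+1 by push_cast; ring,
      show x + ((k:ℤ)+1) = (x + (k:ℤ)) + 1 by ring,
      qfact_succ t (by omega), ih, hic, Finset.prod_insert (by simp),
      show x + ((k:ℤ)+1) = x + (k:ℤ) + 1 by ring]
    ring

lemma sqrt_prod' (s : Finset ℤ) (f : ℤ → ℝ) (h : ∀ i ∈ s, 0 ≤ f i) :
    Real.sqrt (∏ i ∈ s, f i) = ∏ i ∈ s, Real.sqrt (f i) := by
  induction s using Finset.cons_induction with
  | empty => simp
  | cons a s ha ih =>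
    rw [Finset.prod_cons, Finset.prod_cons, Real.sqrt_mul (h a (Finset.mem_cons_self a s)),
      ih (fun i hi => h i (Finset.mem_cons_of_mem hi))]

lemma theta_comm (t : ℝ) (N a b c : ℤ) : theta t N a b c = theta t N b a c := by
  unfold theta
  rw [show (b+a-c)/2 = (a+b-c)/2 by omega, show (b-a+c)/2 = (-a+b+c)/2 by omega,
    show (-b+a+c)/2 = (a-b+c)/2 by omega, show (b+a+c)/2 = (a+b+c)/2 by omega]
  ring_nf

lemma theta_shift (t : ℝ) (ht : 0 < t) (ht1 : t ≠ 1) (N a b c : ℤ) (hN : 2 ≤ N)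
    (hd : 2 ∣ (a + b + c)) (h1 : a - b ≤ c) (h2 : b - a ≤ c) (h3 : c ≤ a + b) :
    theta t 2 a (b + (N - 2)) (c + (N - 2)) =
      theta t N a b c * ∏ m ∈ Finset.Icc (1:ℤ) (N - 2), Real.sqrt (qint t ((-a + b + c) / 2 + m)) := by
  unfold theta
  rw [show (a + (b + (N-2)) - (c + (N-2))) / 2 = (a + b - c) / 2 by omega,
    show (a - (b + (N-2)) + (c + (N-2))) / 2 = (a - b + c) / 2 by omega,
    show (-a + (b + (N-2)) + (c + (N-2))) / 2 = (-a + b + c) / 2 + (N - 2) by omega,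
    show (a + (b + (N-2)) + (c + (N-2))) / 2 + 2 - 1 = (a + b + c) / 2 + N - 1 by omega]
  obtain ⟨K, hK⟩ : ∃ K : ℕ, N - 2 = (K:ℤ) := ⟨(N-2).toNat, by omega⟩
  rw [hK, qfact_add t (show (0:ℤ) ≤ (-a+b+c)/2 by omega) K,
    show ∀ p1 p2 q r d : ℝ, p1 * p2 * (q * r) / d = p1 * p2 * q / d * r from
      fun _ _ _ _ _ => by ring,
    Real.sqrt_mul (le_of_lt (div_pos (mul_pos (mul_pos (qfact_pos ht ht1 _)
      (qfact_pos ht ht1 _)) (qfact_pos ht ht1 _)) (qfact_pos ht ht1 _)))]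
  congr 1
  exact sqrt_prod' _ _ fun m hm =>
    (qint_pos ht ht1 (by simp only [Finset.mem_Icc] at hm; omega)).le

/-- any type I multiplicity-free `U_q(sl_N)` 6-j symbol reduces to a
`U_q(sl_2)` one: the shifted tuple is admissible and
`F_1^N(r₁,r₂,i;r₃,r₄,j) = (−1)^N [N−1]! [N−2]! Θ₁(N) F_1^2(r₁, r₂+N−2, i+N−2; r₃, r₄+N−2, j+N−2)`. -/
theorem stmt7 (t : ℝ) (ht : 0 < t) (ht1 : t ≠ 1) (r₁ r₂ r₃ r₄ i j N : ℤ)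
    (hadm : Admissible r₁ r₂ r₃ r₄ i j N) (hfus : r₁ + r₃ = r₂ + r₄) :
    Admissible r₁ (r₂ + N - 2) r₃ (r₄ + N - 2) (i + N - 2) (j + N - 2) 2 ∧
    F t 1 N r₁ r₂ i r₃ r₄ j =
      (-1 : ℝ) ^ N * qfact t (N - 1) * qfact t (N - 2) *
        (∏ m ∈ Finset.Icc (1 : ℤ) (N - 2),
          (Real.sqrt (qint t ((i - r₁ + r₂) / 2 + m) * qint t ((j + r₂ - r₃) / 2 + m) *
            qint t ((j - r₁ + r₄) / 2 + m) * qint t ((i - r₃ + r₄) / 2 + m)))⁻¹) *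
        F t 1 2 r₁ (r₂ + N - 2) (i + N - 2) r₃ (r₄ + N - 2) (j + N - 2) := by
  obtain ⟨h1, h2, h3, h4, h5, h6, hN, p1, p2, p3, p4, hi1, hi2, hj1, hj2⟩ := hadm
  simp only [max_le_iff, le_min_iff, abs_le] at hi1 hi2 hj1 hj2
  obtain ⟨⟨hi1a, hi1b⟩, hi1c, hi1d⟩ := hi1
  obtain ⟨hi2a, hi2b⟩ := hi2
  obtain ⟨⟨hj1a, hj1b⟩, hj1c, hj1d⟩ := hj1
  obtain ⟨hj2a, hj2b⟩ := hj2
  constructor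
  · unfold Admissible
    simp only [max_le_iff, le_min_iff, abs_le]
    omega
  -- the identity
  have hm1 : ((-1:ℝ)) ≠ 0 := by norm_num
  have h2' : ((-1:ℝ)) ^ (2:ℤ) = 1 := by norm_num
  have h11 : (-1:ℝ) ^ N * (-1:ℝ) ^ N = 1 := by
    rw [← zpow_add₀ hm1, show N + N = 2 * N by ring, zpow_mul, h2', one_zpow]
  have hsign : ∀ k : ℤ, (-1:ℝ) ^ (k + (N - 2)) = (-1:ℝ) ^ N * (-1:ℝ) ^ k := by
    intro k
    rw [zpow_add₀ hm1, zpow_sub₀ hm1, h2', div_one, mul_comm]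
  -- range equalities
  have hmin : mMin r₁ (r₂ + N - 2) r₃ (r₄ + N - 2) (i + N - 2) (j + N - 2) =
      mMin r₁ r₂ r₃ r₄ i j := by
    unfold mMin; omega
  have hmax : mMax r₁ (r₂ + N - 2) r₃ (r₄ + N - 2) (i + N - 2) (j + N - 2) =
      mMax r₁ r₂ r₃ r₄ i j := by
    unfold mMax; omega
  have hrho : rho r₁ (r₂ + N - 2) r₃ (r₄ + N - 2) = rho r₁ r₂ r₃ r₄ + (N - 2) := by
    unfold rho; omega
  -- the Θ·K′ relation
  have hTheta : (∏ m ∈ Finset.Icc (1 : ℤ) (N - 2),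
        (Real.sqrt (qint t ((i - r₁ + r₂) / 2 + m) * qint t ((j + r₂ - r₃) / 2 + m) *
          qint t ((j - r₁ + r₄) / 2 + m) * qint t ((i - r₃ + r₄) / 2 + m)))⁻¹) *
      ((∏ m ∈ Finset.Icc (1:ℤ) (N - 2), Real.sqrt (qint t ((-r₁ + r₂ + i) / 2 + m))) *
       (∏ m ∈ Finset.Icc (1:ℤ) (N - 2), Real.sqrt (qint t ((-r₃ + r₄ + i) / 2 + m))) *
       (∏ m ∈ Finset.Icc (1:ℤ) (N - 2), Real.sqrt (qint t ((-r₁ + r₄ + j) / 2 + m))) *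
       (∏ m ∈ Finset.Icc (1:ℤ) (N - 2), Real.sqrt (qint t ((-r₃ + r₂ + j) / 2 + m)))) = 1 := by
    rw [← Finset.prod_mul_distrib, ← Finset.prod_mul_distrib, ← Finset.prod_mul_distrib,
      ← Finset.prod_mul_distrib]
    apply Finset.prod_eq_one
    intro m hm
    rw [Finset.mem_Icc] at hm
    rw [show (-r₁ + r₂ + i) / 2 + m = (i - r₁ + r₂) / 2 + m by omega,
      show (-r₃ + r₄ + i) / 2 + m = (i - r₃ + r₄) / 2 + m by omega,
      show (-r₁ + r₄ + j) / 2 + m = (j - r₁ + r₄) / 2 + m by omega,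
      show (-r₃ + r₂ + j) / 2 + m = (j + r₂ - r₃) / 2 + m by omega]
    have q1 : 0 < qint t ((i - r₁ + r₂) / 2 + m) := qint_pos ht ht1 (by omega)
    have q2 : 0 < qint t ((j + r₂ - r₃) / 2 + m) := qint_pos ht ht1 (by omega)
    have q3 : 0 < qint t ((j - r₁ + r₄) / 2 + m) := qint_pos ht ht1 (by omega)
    have q4 : 0 < qint t ((i - r₃ + r₄) / 2 + m) := qint_pos ht ht1 (by omega)
    rw [Real.sqrt_mul (mul_nonneg (mul_nonneg q1.le q2.le) q3.le),
      Real.sqrt_mul (mul_nonneg q1.le q2.le), Real.sqrt_mul q1.le]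
    have n1 : Real.sqrt (qint t ((i - r₁ + r₂) / 2 + m)) ≠ 0 := ne_of_gt (Real.sqrt_pos.2 q1)
    have n2 : Real.sqrt (qint t ((j + r₂ - r₃) / 2 + m)) ≠ 0 := ne_of_gt (Real.sqrt_pos.2 q2)
    have n3 : Real.sqrt (qint t ((j - r₁ + r₄) / 2 + m)) ≠ 0 := ne_of_gt (Real.sqrt_pos.2 q3)
    have n4 : Real.sqrt (qint t ((i - r₃ + r₄) / 2 + m)) ≠ 0 := ne_of_gt (Real.sqrt_pos.2 q4)
    field_simp
  have hprod : (∏ m ∈ Finset.Icc (1 : ℤ) (N - 2),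
        (Real.sqrt (qint t ((i - r₁ + r₂) / 2 + m) * qint t ((j + r₂ - r₃) / 2 + m) *
          qint t ((j - r₁ + r₄) / 2 + m) * qint t ((i - r₃ + r₄) / 2 + m)))⁻¹) *
      Kprime t 2 r₁ (r₂ + N - 2) r₃ (r₄ + N - 2) (i + N - 2) (j + N - 2) *
      (qfact t (N - 1) * qfact t (N - 2)) = Kprime t N r₁ r₂ r₃ r₄ i j := by
    unfold Kprime
    rw [show (2:ℤ) - 1 = 1 by norm_num, show (2:ℤ) - 2 = 0 by norm_num,
      qfact_one ht ht1, qfact_zero]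
    rw [show r₂ + N - 2 = r₂ + (N - 2) by ring, show r₄ + N - 2 = r₄ + (N - 2) by ring,
      show i + N - 2 = i + (N - 2) by ring, show j + N - 2 = j + (N - 2) by ring]
    rw [theta_comm t 2 (r₂ + (N - 2)) r₃ (j + (N - 2))]
    rw [theta_shift t ht ht1 N r₁ r₂ i hN p1 (by omega) (by omega) (by omega),
      theta_shift t ht ht1 N r₃ r₄ i hN p2 (by omega) (by omega) (by omega),
      theta_shift t ht ht1 N r₁ r₄ j hN p3 (by omega) (by omega) (by omega),
      theta_shift t ht ht1 N r₃ r₂ j hN (by omega) (by omega) (by omega) (by omega),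
      theta_comm t N r₃ r₂ j]
    linear_combination (theta t N r₁ r₂ i * theta t N r₃ r₄ i * theta t N r₁ r₄ j *
      theta t N r₂ r₃ j * qfact t (N - 1) * qfact t (N - 2)) * hTheta
  have key : ∀ KN q1 q2 Th K₂ s Q D : ℝ, Th * K₂ * (q1 * q2) = KN →
      KN * (s * Q / D) = (-1:ℝ) ^ N * q1 * q2 * Th * (K₂ * ((-1:ℝ) ^ N * s * Q / D)) := by
    intro KN q1 q2 Th K₂ s Q D h
    rw [← h]
    linear_combination (-(q1 * q2 * Th * K₂ * s * Q / D)) * h11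
  unfold F
  rw [hmin, hmax, Finset.mul_sum, Finset.mul_sum, Finset.mul_sum]
  refine Finset.sum_congr rfl fun m hm => ?_
  have i1 : (if (1:ℕ) = 2 then (1:ℤ) else 0) = 0 := rfl
  have i2 : (if (1:ℕ) = 1 then (1:ℤ) else 0) = 1 := rfl
  rw [i1, i2, mul_zero, mul_zero, add_zero, add_zero, mul_one, mul_one]
  rw [hrho,
    show rho r₁ r₂ r₃ r₄ + (N - 2) - m = rho r₁ r₂ r₃ r₄ - m + (N - 2) by ring,
    hsign (rho r₁ r₂ r₃ r₄ - m),
    show rho r₁ r₂ r₃ r₄ + (N - 2) + 2 - 1 - m = rho r₁ r₂ r₃ r₄ + N - 1 - m by ring,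
    show r₃ + (r₄ + N - 2) - (i + N - 2) = r₃ + r₄ - i by ring,
    show r₂ + N - 2 + r₃ - (j + N - 2) = r₂ + r₃ - j by ring,
    show r₁ + (r₄ + N - 2) - (j + N - 2) = r₁ + r₄ - j by ring,
    show i + N - 2 + (j + N - 2) - (r₂ + N - 2) - (r₄ + N - 2) = i + j - r₂ - r₄ by ring,
    show r₁ + (r₂ + N - 2) - (i + N - 2) = r₁ + r₂ - i by ring,
    show (i + N - 2 + (j + N - 2) - r₁ - r₃) / 2 = (i + j - r₁ - r₃) / 2 + (N - 2) by omega,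
    show (i + j - r₁ - r₃) / 2 + (N - 2) + (2 - 2) + m = (i + j - r₁ - r₃) / 2 + (N - 2) + m
      by ring]
  exact key _ _ _ _ _ _ _ _ hprod
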